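/- Let Σ=(Γ,σ) be a signed graph with an orientation ω compatible with σ and let G be a finite additive abelian group. Then: (i) a map f: E → G is a G-tension of Σ if and only if for every positive closed walk W=(v₁,e₁,…,v_k,e_k,v₁) one has Σ_{i=1}^k (ω(v_i,e_i)·Π_{j=1}^{i−1}σ(e_j))·f(e_i) = 0; and (ii) f is a G-potential difference of Σ if and only if f is a G-tension and for every negative closed walk W=(v₁,e₁,…,v_k,e_k,v₁) one has Σ_{i=1}^k f(e_i) ∈ 2G. -/

import Mathlib

attribute [local instance] Classical.propDecidable

noncomputable section SignedGraphs

/-- A signed graph: a multigraph with ordered pairs of endpoints (the order is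
an artefact of the encoding) together with a sign `±1` on each edge. -/
structure SGraph (V : Type*) (E : Type*) where
  ends : E → V × V
  sign : E → ℤˣ

namespace SGraph

variable {V E : Type*}

/-- Endpoint of `e` on side `b`; a loop has both endpoints equal, but its two
half-edges are distinguished by the side `b`. -/
def endpt (Γ : SGraph V E) (e : E) (b : Bool) : V :=
  cond b (Γ.ends e).1 (Γ.ends e).2

/-- `e` is a loop of the underlying graph. -/
def IsLoop (Γ : SGraph V E) (e : E) : Prop := (Γ.ends e).1 = (Γ.ends e).2

/-- Walks in a signed multigraph: a step traverses an edge `e` in direction `d`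
(from the side-`d` endpoint to the other endpoint). -/
inductive Walk (Γ : SGraph V E) : V → V → Type _
  | nil (v : V) : Walk Γ v v
  | cons (e : E) (d : Bool) {w : V} (p : Walk Γ (Γ.endpt e (!d)) w) : Walk Γ (Γ.endpt e d) w

namespace Walk

variable {Γ : SGraph V E}

/-- The list of vertices visited by a walk (including the final one). -/
def verts : ∀ {u v : V}, Γ.Walk u v → List V
  | _, _, .nil x => [x]
  | _, _, .cons e d p => Γ.endpt e d :: p.verts

/-- The list of edges traversed by a walk. -/
def edges : ∀ {u v : V}, Γ.Walk u v → List E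
  | _, _, .nil _ => []
  | _, _, .cons e _ p => e :: p.edges

/-- The list of (edge, direction) steps of a walk. -/
def steps : ∀ {u v : V}, Γ.Walk u v → List (E × Bool)
  | _, _, .nil _ => []
  | _, _, .cons e d p => (e, d) :: p.steps

/-- The sources of the steps of a walk, i.e. all visited vertices except the last. -/
def srcs {u v : V} (W : Γ.Walk u v) : List V := W.verts.dropLast

/-- The sign of a walk: the product of the signs of its edges. -/
def sgn : ∀ {u v : V}, Γ.Walk u v → ℤˣ
  | _, _, .nil _ => 1
  | _, _, .cons e _ p => Γ.sign e * p.sgn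

/-- Concatenation of walks. -/
def append : ∀ {u v w : V}, Γ.Walk u v → Γ.Walk v w → Γ.Walk u w
  | _, _, _, .nil _, q => q
  | _, _, _, .cons e d p, q => .cons e d (p.append q)

/-- The sum `Σᵢ f(eᵢ)` of the values of `f` on the edges of the walk,
with multiplicity. -/
def edgeSum {G : Type*} [AddCommGroup G] (f : E → G) {u v : V} (W : Γ.Walk u v) : G :=
  (W.edges.map f).sum

/-- The sum `Σᵢ ω(vᵢ,eᵢ)·(Π_{j<i} σ(eⱼ))·f(eᵢ)` along a walk, where `ω(vᵢ,eᵢ)`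
is the value of `ω` on the half-edge by which the walk leaves `vᵢ`. -/
def tensionSum {G : Type*} [AddCommGroup G] (ω : E → Bool → ℤˣ) (f : E → G) :
    ∀ {u v : V}, Γ.Walk u v → G
  | _, _, .nil _ => 0
  | _, _, .cons e d p => ((ω e d : ℤ) • f e) + ((Γ.sign e : ℤ) • tensionSum ω f p)

/-- `Q` is the reverse of the walk `P`. -/
def IsReverseOf {u v : V} (Q : Γ.Walk v u) (P : Γ.Walk u v) : Prop :=
  Q.steps = P.steps.reverse.map fun s => (s.1, !s.2)

end Walk

/-- A closed walk is a cycle if it is nontrivial, visits no vertex twice and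
uses no edge twice. -/
def IsCycle (Γ : SGraph V E) {v : V} (W : Γ.Walk v v) : Prop :=
  W.edges ≠ [] ∧ W.srcs.Nodup ∧ W.edges.Nodup

/-- A balanced (positive) cycle. -/
def IsBalancedCycle (Γ : SGraph V E) {v : V} (W : Γ.Walk v v) : Prop :=
  Γ.IsCycle W ∧ W.sgn = 1

/-- An unbalanced (negative) cycle. -/
def IsUnbalancedCycle (Γ : SGraph V E) {v : V} (W : Γ.Walk v v) : Prop :=
  Γ.IsCycle W ∧ W.sgn = -1

/-- A nontrivial walk that is a simple path (all visited vertices distinct). -/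
def IsPathWalk (Γ : SGraph V E) {u v : V} (P : Γ.Walk u v) : Prop :=
  P.edges ≠ [] ∧ P.verts.Nodup

/-- A tight handcuff at `v`: two edge-disjoint unbalanced cycles sharing exactly
the vertex `v`. -/
def IsTightHandcuff (Γ : SGraph V E) {v : V} (C₁ C₂ : Γ.Walk v v) : Prop :=
  Γ.IsUnbalancedCycle C₁ ∧ Γ.IsUnbalancedCycle C₂ ∧
    (∀ x ∈ C₁.srcs, x ∈ C₂.srcs → x = v) ∧ ∀ e ∈ C₁.edges, e ∉ C₂.edges

/-- A loose handcuff: two vertex-disjoint unbalanced cycles `C₁` (at `u`) and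
`C₂` (at `w`) joined by a simple path `P` from `u` to `w` meeting the cycles
exactly in its endpoints. -/
def IsLooseHandcuff (Γ : SGraph V E) {u w : V} (C₁ : Γ.Walk u u) (P : Γ.Walk u w)
    (C₂ : Γ.Walk w w) : Prop :=
  Γ.IsUnbalancedCycle C₁ ∧ Γ.IsUnbalancedCycle C₂ ∧ Γ.IsPathWalk P ∧
    (∀ x ∈ C₁.srcs, x ∉ C₂.srcs) ∧
    (∀ x ∈ P.verts, x ∈ C₁.srcs → x = u) ∧
    (∀ x ∈ P.verts, x ∈ C₂.srcs → x = w) ∧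
    ∀ e ∈ P.edges, e ∉ C₁.edges ∧ e ∉ C₂.edges

/-- The canonical closed walks traversing a circuit of the signed graph:
a balanced cycle, a tight handcuff `C₁ * C₂`, or a loose handcuff
`C₁ * P * C₂ * P⁻¹` (the circuit path edges being used twice). -/
def IsBasicCircuitWalk (Γ : SGraph V E) {v : V} (W : Γ.Walk v v) : Prop :=
  Γ.IsBalancedCycle W ∨
    (∃ C₁ C₂ : Γ.Walk v v, Γ.IsTightHandcuff C₁ C₂ ∧ W = C₁.append C₂) ∨
    ∃ (w : V) (C₁ : Γ.Walk v v) (P : Γ.Walk v w) (C₂ : Γ.Walk w w) (Q : Γ.Walk w v),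
      Γ.IsLooseHandcuff C₁ P C₂ ∧ Q.IsReverseOf P ∧
        W = C₁.append (P.append (C₂.append Q))

/-- A circuit walk: a rotation of a basic circuit walk. -/
def IsCircuitWalk (Γ : SGraph V E) {v : V} (W : Γ.Walk v v) : Prop :=
  ∃ (u : V) (A : Γ.Walk u v) (B : Γ.Walk v u),
    W = B.append A ∧ Γ.IsBasicCircuitWalk (A.append B)

/-- `e` is a circuit path edge: it lies on the connecting path of an unbalanced
loose handcuff. -/
def IsCircuitPathEdge (Γ : SGraph V E) (e : E) : Prop :=
  ∃ (u w : V) (C₁ : Γ.Walk u u) (P : Γ.Walk u w) (C₂ : Γ.Walk w w),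
    Γ.IsLooseHandcuff C₁ P C₂ ∧ e ∈ P.edges

/-- Adjacency via an edge. -/
def Adj (Γ : SGraph V E) (a b : V) : Prop := ∃ e, Γ.ends e = (a, b) ∨ Γ.ends e = (b, a)

/-- The set of connected components. -/
def Components (Γ : SGraph V E) : Type _ := Quot Γ.Adj

/-- The connected component of a vertex. -/
def comp (Γ : SGraph V E) (v : V) : Γ.Components := Quot.mk _ v

/-- The number `k(Γ)` of connected components. -/
def kAll (Γ : SGraph V E) : ℕ := Nat.card Γ.Components

/-- A connected component is balanced if every cycle it contains is balanced. -/
def IsBalancedComponent (Γ : SGraph V E) (c : Γ.Components) : Prop :=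
  ∀ v : V, Γ.comp v = c → ∀ W : Γ.Walk v v, Γ.IsCycle W → W.sgn = 1

/-- The number `k_b(Σ)` of balanced connected components. -/
def kb (Γ : SGraph V E) : ℕ := Nat.card {c : Γ.Components // Γ.IsBalancedComponent c}

/-- The number `k_u(Σ)` of unbalanced connected components. -/
def ku (Γ : SGraph V E) : ℕ := Nat.card {c : Γ.Components // ¬ Γ.IsBalancedComponent c}

/-- A signed graph is balanced if all its cycles are balanced. -/
def Balanced (Γ : SGraph V E) : Prop :=
  ∀ (v : V) (W : Γ.Walk v v), Γ.IsCycle W → W.sgn = 1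

/-- A signed graph is connected if it has exactly one connected component. -/
def Connected (Γ : SGraph V E) : Prop := Γ.kAll = 1

/-- The spanning subgraph `Σ \ Aᶜ` with edge set `A`. -/
def restrict (Γ : SGraph V E) (A : Set E) : SGraph V A :=
  { ends := fun e => Γ.ends e, sign := fun e => Γ.sign e }

/-- The signed Tutte polynomial (as a function of `x`, `y`, `z`):
`T_Σ(X,Y,Z) = Σ_{A⊆E} (X−1)^{k(Σ\Aᶜ)−k(Σ)} (Y−1)^{|A|−|V|+k_b(Σ\Aᶜ)} (Z−1)^{k_u(Σ\Aᶜ)}`. -/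
def signedTutte {K : Type*} [CommRing K] (Γ : SGraph V E) (x y z : K) : K :=
  ∑ᶠ A : Finset E,
    (x - 1) ^ ((Γ.restrict (A : Set E)).kAll - Γ.kAll) *
      (y - 1) ^ ((A.card + (Γ.restrict (A : Set E)).kb) - Nat.card V) *
        (z - 1) ^ (Γ.restrict (A : Set E)).ku

/-- Deletion of an edge. -/
def deleteEdge (Γ : SGraph V E) (e : E) : SGraph V {e' : E // e' ≠ e} :=
  { ends := fun e' => Γ.ends e'.1, sign := fun e' => Γ.sign e'.1 }

/-- The relation identifying the two endpoints of `e`. -/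
def contractRel (Γ : SGraph V E) (e : E) (a b : V) : Prop := (a, b) = Γ.ends e

/-- Contraction of an edge: the two endpoints are identified and the edge is
deleted.  (For a loop this is just deletion, as the identification is trivial.) -/
def contract (Γ : SGraph V E) (e : E) : SGraph (Quot (Γ.contractRel e)) {e' : E // e' ≠ e} :=
  { ends := fun e' => (Quot.mk _ (Γ.ends e'.1).1, Quot.mk _ (Γ.ends e'.1).2),
    sign := fun e' => Γ.sign e'.1 }

/-- `e` is a bridge: its deletion increases the number of connected components. -/
def IsBridge (Γ : SGraph V E) (e : E) : Prop := Γ.kAll < (Γ.deleteEdge e).kAll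

/-- An orientation of the half-edges, compatible with the signature. -/
def IsCompatible (Γ : SGraph V E) (ω : E → Bool → ℤˣ) : Prop :=
  ∀ e, Γ.sign e = -(ω e true * ω e false)

/-- A `G`-flow: Kirchhoff's law holds at every vertex. -/
def IsFlow (Γ : SGraph V E) (ω : E → Bool → ℤˣ) {G : Type*} [AddCommGroup G]
    (f : E → G) : Prop :=
  ∀ v : V,
    (∑ᶠ e : E, ((if Γ.endpt e true = v then (ω e true : ℤ) • f e else 0) +
      (if Γ.endpt e false = v then (ω e false : ℤ) • f e else 0))) = 0

/-- A `G`-tension: the alternating sum along every circuit walk vanishes. -/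
def IsTension (Γ : SGraph V E) (ω : E → Bool → ℤˣ) {G : Type*} [AddCommGroup G]
    (f : E → G) : Prop :=
  ∀ (v : V) (W : Γ.Walk v v), Γ.IsCircuitWalk W → W.tensionSum ω f = 0

end SGraph

/-- The doubling homomorphism `x ↦ x + x = 2x` of an abelian group. -/
def doubleHom (G : Type*) [AddCommGroup G] : G →+ G :=
  AddMonoidHom.mk' (fun x => x + x) (fun a b => add_add_add_comm a b a b)

/-- The subgroup `2G = {2x : x ∈ G}`. -/
def twoG (G : Type*) [AddCommGroup G] : AddSubgroup G := (doubleHom G).range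

/-- The `2`-torsion subgroup `G₂ = {x ∈ G : 2x = 0}`. -/
def torsion2 (G : Type*) [AddCommGroup G] : AddSubgroup G := (doubleHom G).ker

namespace SGraph

variable {V E : Type*}

/-- A `G`-potential difference: a `G`-tension whose sum around every unbalanced
cycle lies in `2G`. -/
def IsPotentialDifference (Γ : SGraph V E) (ω : E → Bool → ℤˣ) {G : Type*} [AddCommGroup G]
    (f : E → G) : Prop :=
  Γ.IsTension ω f ∧
    ∀ (v : V) (W : Γ.Walk v v), Γ.IsUnbalancedCycle W → W.edgeSum f ∈ twoG G

end SGraph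

namespace SGraph

variable {V E : Type*}

/-- Proper coloring by elements of a set `X` with involution `ι`: adjacent
endpoints of a positive edge get different colors, and for a negative edge the
`ι`-image of one endpoint's color differs from the other endpoint's color. -/
def IsProperInvColoring (Γ : SGraph V E) {X : Type*} (ι : X → X) (f : V → X) : Prop :=
  ∀ e : E, (Γ.sign e = 1 → f ((Γ.ends e).1) ≠ f ((Γ.ends e).2)) ∧
    (Γ.sign e = -1 → ι (f ((Γ.ends e).1)) ≠ f ((Γ.ends e).2))

/-- A proper `G`-coloring: for every edge `e = uv`, `f(u) ≠ f(v)` if `e` is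
positive and `-f(u) ≠ f(v)` if `e` is negative, i.e. `σ(e)•f(u) ≠ f(v)`. -/
def IsProperColoring (Γ : SGraph V E) {G : Type*} [AddCommGroup G] (f : V → G) : Prop :=
  ∀ e : E, ((Γ.sign e : ℤ) • f ((Γ.ends e).1)) ≠ f ((Γ.ends e).2)

/-- Zaslavsky's proper `n`-coloring: colors in `{0, ±1, …, ±n}` with
`f(u) ≠ σ(e)·f(v)` for every edge `e = uv`. -/
def IsProperNColoring (Γ : SGraph V E) (n : ℕ) (f : V → ℤ) : Prop :=
  (∀ v, |f v| ≤ (n : ℤ)) ∧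
    ∀ e : E, f ((Γ.ends e).1) ≠ (Γ.sign e : ℤ) * f ((Γ.ends e).2)

/-- `T ⊆ E` is a spanning tree: the spanning subgraph `(V,T)` is connected and
contains no cycle. -/
def IsSpanningTree (Γ : SGraph V E) (T : Set E) : Prop :=
  (Γ.restrict T).Connected ∧
    ∀ (v : V) (W : (Γ.restrict T).Walk v v), ¬ (Γ.restrict T).IsCycle W

/-- A connected basis of a connected signed graph: a spanning tree if `Σ` is
balanced; otherwise a spanning tree plus one extra edge closing an unbalanced
cycle. -/
def IsConnectedBasis (Γ : SGraph V E) (B : Set E) : Prop :=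
  (Γ.Balanced ∧ Γ.IsSpanningTree B) ∨
    (¬ Γ.Balanced ∧ ∃ (T : Set E) (e : E), Γ.IsSpanningTree T ∧ e ∉ T ∧ B = insert e T ∧
      ∀ (v : V) (W : (Γ.restrict B).Walk v v), (Γ.restrict B).IsCycle W → W.sgn = -1)

/-- Switching at a vertex `v`: the sign of every non-loop edge incident with `v`
is negated; loops keep their sign. -/
def switchAt (Γ : SGraph V E) (v : V) : SGraph V E :=
  { ends := Γ.ends,
    sign := fun e => if ((Γ.ends e).1 = v ↔ (Γ.ends e).2 = v) then Γ.sign e else -Γ.sign e }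

/-- Switching at a set `S` of vertices (the composite of the switchings at the
vertices of `S`): the sign of an edge is negated iff exactly one of its
endpoints lies in `S`. -/
def switchSet (Γ : SGraph V E) (S : Set V) : SGraph V E :=
  { ends := Γ.ends,
    sign := fun e => if ((Γ.ends e).1 ∈ S ↔ (Γ.ends e).2 ∈ S) then Γ.sign e else -Γ.sign e }

/-- Isomorphism of signed graphs (as undirected signed multigraphs). -/
def Iso {V₁ E₁ V₂ E₂ : Type*} (Γ₁ : SGraph V₁ E₁) (Γ₂ : SGraph V₂ E₂) : Prop :=
  ∃ (φ : V₁ ≃ V₂) (ψ : E₁ ≃ E₂), ∀ e : E₁,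
    (Γ₂.ends (ψ e) = (φ (Γ₁.ends e).1, φ (Γ₁.ends e).2) ∨
      Γ₂.ends (ψ e) = (φ (Γ₁.ends e).2, φ (Γ₁.ends e).1)) ∧
    Γ₂.sign (ψ e) = Γ₁.sign e

/-- Switching equivalence: isomorphism after switching at a set of vertices. -/
def SwitchEquiv {V₁ E₁ V₂ E₂ : Type*} (Γ₁ : SGraph V₁ E₁) (Γ₂ : SGraph V₂ E₂) : Prop :=
  ∃ S : Set V₁, Iso (Γ₁.switchSet S) Γ₂

/-- Disjoint union of signed graphs. -/
def disjUnion {V₁ E₁ V₂ E₂ : Type*} (Γ₁ : SGraph V₁ E₁) (Γ₂ : SGraph V₂ E₂) :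
    SGraph (V₁ ⊕ V₂) (E₁ ⊕ E₂) where
  ends := fun e => match e with
    | .inl e => (Sum.inl (Γ₁.ends e).1, Sum.inl (Γ₁.ends e).2)
    | .inr e => (Sum.inr (Γ₂.ends e).1, Sum.inr (Γ₂.ends e).2)
  sign := fun e => match e with
    | .inl e => Γ₁.sign e
    | .inr e => Γ₂.sign e

/-- The difference operator `δ : G^V → G^E`,
`(δg)(e) = ω(v,e)·g(v) + ω(u,e)·g(u)` for `e = uv`. -/
def deltaHom (Γ : SGraph V E) (ω : E → Bool → ℤˣ) (G : Type*) [AddCommGroup G] :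
    (V → G) →+ (E → G) :=
  AddMonoidHom.mk'
    (fun g e => (ω e true : ℤ) • g ((Γ.ends e).1) + (ω e false : ℤ) • g ((Γ.ends e).2))
    (by
      intro a b
      funext e
      simp only [Pi.add_apply, smul_add]
      abel)

end SGraph

end SignedGraphs

noncomputable section Aux

namespace SGraph

variable {V E : Type*} {Γ : SGraph V E}

namespace Walk

variable {G : Type*} [AddCommGroup G] {ω : E → Bool → ℤˣ} {f : E → G}

@[simp] theorem nil_append {u v : V} (q : Γ.Walk u v) : (Walk.nil u).append q = q := rfl

@[simp] theorem cons_append {e : E} {d : Bool} {w x : V} (p : Γ.Walk (Γ.endpt e !d) w)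
    (q : Γ.Walk w x) : (Walk.cons e d p).append q = Walk.cons e d (p.append q) := rfl

@[simp] theorem edges_nil {u : V} : (Walk.nil (Γ := Γ) u).edges = [] := rfl
@[simp] theorem edges_cons {e : E} {d : Bool} {w : V} (p : Γ.Walk (Γ.endpt e !d) w) :
    (Walk.cons e d p).edges = e :: p.edges := rfl
@[simp] theorem steps_nil {u : V} : (Walk.nil (Γ := Γ) u).steps = [] := rfl
@[simp] theorem steps_cons {e : E} {d : Bool} {w : V} (p : Γ.Walk (Γ.endpt e !d) w) :
    (Walk.cons e d p).steps = (e, d) :: p.steps := rfl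
@[simp] theorem verts_nil {u : V} : (Walk.nil (Γ := Γ) u).verts = [u] := rfl
@[simp] theorem verts_cons {e : E} {d : Bool} {w : V} (p : Γ.Walk (Γ.endpt e !d) w) :
    (Walk.cons e d p).verts = Γ.endpt e d :: p.verts := rfl
@[simp] theorem sgn_nil {u : V} : (Walk.nil (Γ := Γ) u).sgn = 1 := rfl
@[simp] theorem sgn_cons {e : E} {d : Bool} {w : V} (p : Γ.Walk (Γ.endpt e !d) w) :
    (Walk.cons e d p).sgn = Γ.sign e * p.sgn := rfl
@[simp] theorem tensionSum_nil {u : V} :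
    (Walk.nil (Γ := Γ) u).tensionSum ω f = 0 := rfl
@[simp] theorem tensionSum_cons {e : E} {d : Bool} {w : V} (p : Γ.Walk (Γ.endpt e !d) w) :
    (Walk.cons e d p).tensionSum ω f
      = ((ω e d : ℤ) • f e) + ((Γ.sign e : ℤ) • p.tensionSum ω f) := rfl
@[simp] theorem edgeSum_nil {u : V} : (Walk.nil (Γ := Γ) u).edgeSum f = 0 := rfl
@[simp] theorem edgeSum_cons {e : E} {d : Bool} {w : V} (p : Γ.Walk (Γ.endpt e !d) w) :
    (Walk.cons e d p).edgeSum f = f e + p.edgeSum f := by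
  simp [edgeSum, edges]

theorem verts_ne_nil : ∀ {u v : V} (p : Γ.Walk u v), p.verts ≠ [] := by
  intro u v p; cases p <;> simp

@[simp] theorem srcs_nil {u : V} : (Walk.nil (Γ := Γ) u).srcs = [] := rfl
@[simp] theorem srcs_cons {e : E} {d : Bool} {w : V} (p : Γ.Walk (Γ.endpt e !d) w) :
    (Walk.cons e d p).srcs = Γ.endpt e d :: p.srcs := by
  simp [srcs, verts, List.dropLast_cons_of_ne_nil (verts_ne_nil p)]

theorem append_nil : ∀ {u v : V} (p : Γ.Walk u v), p.append (Walk.nil v) = p := by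
  intro u v p
  induction p with
  | nil => rfl
  | cons e d p ih => rw [cons_append, ih]

theorem append_assoc : ∀ {a b c d : V} (p : Γ.Walk a b) (q : Γ.Walk b c) (r : Γ.Walk c d),
    (p.append q).append r = p.append (q.append r) := by
  intro a b c d p q r
  induction p with
  | nil => rfl
  | cons e dd p ih => simp [ih]

@[simp] theorem edges_append : ∀ {a b c : V} (p : Γ.Walk a b) (q : Γ.Walk b c),
    (p.append q).edges = p.edges ++ q.edges := by
  intro a b c p q
  induction p with
  | nil => rfl
  | cons e d p ih => simp [ih]

@[simp] theorem steps_append : ∀ {a b c : V} (p : Γ.Walk a b) (q : Γ.Walk b c),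
    (p.append q).steps = p.steps ++ q.steps := by
  intro a b c p q
  induction p with
  | nil => rfl
  | cons e d p ih => simp [ih]

@[simp] theorem srcs_append : ∀ {a b c : V} (p : Γ.Walk a b) (q : Γ.Walk b c),
    (p.append q).srcs = p.srcs ++ q.srcs := by
  intro a b c p q
  induction p with
  | nil => rfl
  | cons e d p ih => simp [ih]

theorem verts_append : ∀ {a b c : V} (p : Γ.Walk a b) (q : Γ.Walk b c),
    (p.append q).verts = p.srcs ++ q.verts := by
  intro a b c p q
  induction p with
  | nil => rfl
  | cons e d p ih => simp [ih]

@[simp] theorem sgn_append : ∀ {a b c : V} (p : Γ.Walk a b) (q : Γ.Walk b c),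
    (p.append q).sgn = p.sgn * q.sgn := by
  intro a b c p q
  induction p with
  | nil => simp
  | cons e d p ih => simp [ih, mul_assoc]

theorem tensionSum_append : ∀ {a b c : V} (p : Γ.Walk a b) (q : Γ.Walk b c),
    (p.append q).tensionSum ω f = p.tensionSum ω f + (p.sgn : ℤ) • q.tensionSum ω f := by
  intro a b c p q
  induction p with
  | nil => simp
  | cons e d p ih => simp [ih, smul_add, Units.val_mul, mul_smul, add_assoc]

@[simp] theorem edgeSum_append : ∀ {a b c : V} (p : Γ.Walk a b) (q : Γ.Walk b c),
    (p.append q).edgeSum f = p.edgeSum f + q.edgeSum f := by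
  intro a b c p q
  induction p with
  | nil => simp
  | cons e d p ih => simp [ih, add_assoc]

theorem sgn_eq_prod : ∀ {a b : V} (p : Γ.Walk a b), p.sgn = (p.edges.map Γ.sign).prod := by
  intro a b p
  induction p with
  | nil => simp
  | cons e d p ih => simp [ih]

theorem verts_eq_srcs_append : ∀ {a b : V} (p : Γ.Walk a b), p.verts = p.srcs ++ [b] := by
  intro a b p
  induction p with
  | nil => simp
  | cons e d p ih => simp [ih]

theorem start_mem_verts : ∀ {a b : V} (p : Γ.Walk a b), a ∈ p.verts := by
  intro a b p; cases p <;> simp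

theorem eq_of_edges_nil : ∀ {a b : V} (p : Γ.Walk a b), p.edges = [] → a = b := by
  intro a b p h
  cases p with
  | nil => rfl
  | cons e d p => simp at h

theorem sgn_of_edges_nil : ∀ {a b : V} (p : Γ.Walk a b), p.edges = [] → p.sgn = 1 := by
  intro a b p h
  cases p with
  | nil => rfl
  | cons e d p => simp at h

theorem tensionSum_of_edges_nil : ∀ {a b : V} (p : Γ.Walk a b), p.edges = [] →
    p.tensionSum ω f = 0 := by
  intro a b p h
  cases p with
  | nil => rfl
  | cons e d p => simp at h

theorem edges_ne_nil_of_sgn_neg {a : V} (p : Γ.Walk a a) (h : p.sgn = -1) : p.edges ≠ [] := by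
  intro hn
  rw [sgn_of_edges_nil p hn] at h
  exact absurd h (by decide)

end Walk

end SGraph

end Aux
noncomputable section Aux2

namespace SGraph

variable {V E : Type*} {Γ : SGraph V E}

namespace Walk

variable {G : Type*} [AddCommGroup G] {ω : E → Bool → ℤˣ} {f : E → G}

/-- Change the endpoints of a walk along equalities. -/
def copy {u v u' v' : V} (p : Γ.Walk u v) (hu : u = u') (hv : v = v') : Γ.Walk u' v' :=
  hu ▸ hv ▸ p

@[simp] theorem edges_copy {u v u' v' : V} (p : Γ.Walk u v) (hu : u = u') (hv : v = v') :
    (p.copy hu hv).edges = p.edges := by subst hu; subst hv; rfl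

@[simp] theorem sgn_copy {u v u' v' : V} (p : Γ.Walk u v) (hu : u = u') (hv : v = v') :
    (p.copy hu hv).sgn = p.sgn := by subst hu; subst hv; rfl

@[simp] theorem tensionSum_copy {u v u' v' : V} (p : Γ.Walk u v) (hu : u = u') (hv : v = v') :
    (p.copy hu hv).tensionSum ω f = p.tensionSum ω f := by subst hu; subst hv; rfl

@[simp] theorem edgeSum_copy {u v u' v' : V} (p : Γ.Walk u v) (hu : u = u') (hv : v = v') :
    (p.copy hu hv).edgeSum f = p.edgeSum f := by subst hu; subst hv; rfl

@[simp] theorem srcs_copy {u v u' v' : V} (p : Γ.Walk u v) (hu : u = u') (hv : v = v') :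
    (p.copy hu hv).srcs = p.srcs := by subst hu; subst hv; rfl

/-- A single step traversing `e` against direction `d`. -/
def revSingle (e : E) : ∀ d : Bool, Γ.Walk (Γ.endpt e !d) (Γ.endpt e d)
  | true => .cons e false (.nil _)
  | false => .cons e true (.nil _)

@[simp] theorem steps_revSingle (e : E) (d : Bool) :
    (revSingle (Γ := Γ) e d).steps = [(e, !d)] := by cases d <;> rfl

@[simp] theorem sgn_revSingle (e : E) (d : Bool) :
    (revSingle (Γ := Γ) e d).sgn = Γ.sign e := by cases d <;> simp [revSingle]

@[simp] theorem tensionSum_revSingle (e : E) (d : Bool) :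
    (revSingle (Γ := Γ) e d).tensionSum ω f = (ω e !d : ℤ) • f e := by
  cases d <;> simp [revSingle]

/-- The reverse of a walk. -/
def reverse : ∀ {u v : V}, Γ.Walk u v → Γ.Walk v u
  | _, _, .nil x => .nil x
  | _, _, .cons e d p => p.reverse.append (revSingle e d)

@[simp] theorem reverse_nil {u : V} : (Walk.nil (Γ := Γ) u).reverse = Walk.nil u := rfl

@[simp] theorem sgn_reverse : ∀ {u v : V} (p : Γ.Walk u v), p.reverse.sgn = p.sgn := by
  intro u v p
  induction p with
  | nil => rfl
  | cons e d p ih => simp [reverse, ih, mul_comm]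

theorem steps_reverse : ∀ {u v : V} (p : Γ.Walk u v),
    p.reverse.steps = p.steps.reverse.map fun s => (s.1, !s.2) := by
  intro u v p
  induction p with
  | nil => rfl
  | cons e d p ih => simp [reverse, ih]

theorem isReverseOf_reverse {u v : V} (p : Γ.Walk u v) : p.reverse.IsReverseOf p :=
  steps_reverse p

@[simp] theorem edgeSum_reverse : ∀ {u v : V} (p : Γ.Walk u v),
    p.reverse.edgeSum f = p.edgeSum f := by
  intro u v p
  induction p with
  | nil => rfl
  | cons e d p ih =>
    cases d <;> simp [reverse, ih, revSingle] <;> abel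

end Walk

/-- Key identity for a compatible orientation. -/
theorem omega_not (ω : E → Bool → ℤˣ) (hω : Γ.IsCompatible ω) (e : E) (d : Bool) :
    ω e (!d) = -(Γ.sign e * ω e d) := by
  rcases Int.units_eq_one_or (ω e true) with h1 | h1 <;>
    rcases Int.units_eq_one_or (ω e false) with h2 | h2 <;>
      cases d <;> simp [hω e, h1, h2]

namespace Walk

variable {G : Type*} [AddCommGroup G] {ω : E → Bool → ℤˣ} {f : E → G}

theorem tensionSum_reverse (hω : Γ.IsCompatible ω) : ∀ {u v : V} (p : Γ.Walk u v),
    p.reverse.tensionSum ω f = -((p.sgn : ℤ) • p.tensionSum ω f) := by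
  intro u v p
  induction p with
  | nil => simp
  | cons e d p ih =>
    rw [reverse, tensionSum_append, ih, tensionSum_revSingle, sgn_reverse, tensionSum_cons,
      sgn_cons, omega_not ω hω e d]
    rcases Int.units_eq_one_or p.sgn with h1 | h1 <;>
      rcases Int.units_eq_one_or (Γ.sign e) with h2 | h2 <;>
        rcases Int.units_eq_one_or (ω e d) with h3 | h3 <;>
          simp [h1, h2, h3] <;> abel

end Walk

end SGraph

end Aux2
noncomputable section Aux3

namespace SGraph

variable {V E : Type*} {Γ : SGraph V E}

namespace Walk

variable {G : Type*} [AddCommGroup G] {ω : E → Bool → ℤˣ} {f : E → G}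

theorem eq_nil_of_edges_nil {z : V} (p : Γ.Walk z z) (h : p.edges = []) : p = Walk.nil z := by
  cases p with
  | nil => rfl
  | cons e d p => simp at h

theorem exists_srcs_cons {u v : V} (W : Γ.Walk u v) (h : W.edges ≠ []) :
    ∃ t, W.srcs = u :: t := by
  cases W with
  | nil => simp at h
  | cons e d p => exact ⟨p.srcs, by simp⟩

theorem base_mem_srcs {v : V} (W : Γ.Walk v v) (h : W.edges ≠ []) : v ∈ W.srcs := by
  obtain ⟨t, ht⟩ := exists_srcs_cons W h
  rw [ht]; exact List.mem_cons_self

theorem endpts_mem_verts {u v : V} (W : Γ.Walk u v) (e : E) (he : e ∈ W.edges) :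
    Γ.endpt e true ∈ W.verts ∧ Γ.endpt e false ∈ W.verts := by
  induction W with
  | nil => simp at he
  | cons e' d p ih =>
    by_cases h : e = e'
    · subst h
      have hs : Γ.endpt e (!d) ∈ p.verts := start_mem_verts p
      cases d
      · exact ⟨by simp; right; simpa using hs, by simp⟩
      · exact ⟨by simp, by simp; right; simpa using hs⟩
    · have he' : e ∈ p.edges := by
        rcases List.mem_cons.mp (by simpa using he) with h' | h'
        · exact absurd h' h
        · exact h'
      obtain ⟨h1, h2⟩ := ih he'
      exact ⟨by simp [h1], by simp [h2]⟩

theorem mem_srcs_of_mem_verts {v x : V} (W : Γ.Walk v v) (h : W.edges ≠ [])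
    (hx : x ∈ W.verts) : x ∈ W.srcs := by
  rw [verts_eq_srcs_append] at hx
  rcases List.mem_append.mp hx with h' | h'
  · exact h'
  · simp at h'
    subst h'
    exact base_mem_srcs W h

theorem exists_split_src {u v : V} (W : Γ.Walk u v) (x : V) (hx : x ∈ W.srcs) :
    ∃ (A : Γ.Walk u x) (B : Γ.Walk x v), W = A.append B ∧ B.edges ≠ [] ∧ x ∉ A.srcs := by
  induction W with
  | nil => simp at hx
  | cons e d p ih =>
    by_cases h : x = Γ.endpt e d
    · subst h
      exact ⟨Walk.nil _, Walk.cons e d p, rfl, by simp, by simp⟩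
    · have hx' : x ∈ p.srcs := by
        rcases List.mem_cons.mp (by simpa using hx) with h' | h'
        · exact absurd h' h
        · exact h'
      obtain ⟨A, B, hW, hB, hA⟩ := ih hx'
      exact ⟨Walk.cons e d A, B, by rw [cons_append, ← hW], hB,
        by simp [hA]; exact fun hc => h hc⟩

theorem exists_split_edge {u v : V} (W : Γ.Walk u v) (e : E) (he : e ∈ W.edges) :
    ∃ (d : Bool) (A : Γ.Walk u (Γ.endpt e d)) (B : Γ.Walk (Γ.endpt e (!d)) v),
      W = A.append (Walk.cons e d B) ∧ e ∉ A.edges := by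
  induction W with
  | nil => simp at he
  | cons e' d' p ih =>
    by_cases h : e = e'
    · subst h
      exact ⟨d', Walk.nil _, p, rfl, by simp⟩
    · have he' : e ∈ p.edges := by
        rcases List.mem_cons.mp (by simpa using he) with h' | h'
        · exact absurd h' h
        · exact h'
      obtain ⟨d, A, B, hW, hA⟩ := ih he'
      exact ⟨d, Walk.cons e' d' A, B, by rw [cons_append, ← hW], by simp [hA, h]⟩

theorem tensionSum_backtrack (hω : Γ.IsCompatible ω) (e : E) (d : Bool) {w : V}
    (p : Γ.Walk (Γ.endpt e !(!d)) w) :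
    (Walk.cons e d (Walk.cons e (!d) p)).tensionSum ω f = p.tensionSum ω f := by
  rw [tensionSum_cons, tensionSum_cons, omega_not ω hω e d]
  rcases Int.units_eq_one_or (Γ.sign e) with h1 | h1 <;>
    rcases Int.units_eq_one_or (ω e d) with h2 | h2 <;>
      simp [h1, h2] <;> abel

theorem sgn_backtrack (e : E) (d : Bool) {w : V} (p : Γ.Walk (Γ.endpt e !(!d)) w) :
    (Walk.cons e d (Walk.cons e (!d) p)).sgn = p.sgn := by
  rw [sgn_cons, sgn_cons, ← mul_assoc, Int.units_mul_self, one_mul]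

/-- Decomposition of a walk with a repeated source vertex. -/
theorem decomp_of_srcs_dup {u v : V} (W : Γ.Walk u v) (h : ¬ W.srcs.Nodup) :
    ∃ (z : V) (A : Γ.Walk u z) (L : Γ.Walk z z) (C : Γ.Walk z v),
      W = A.append (L.append C) ∧ L.edges ≠ [] ∧ C.edges ≠ [] := by
  induction W with
  | nil => simp at h
  | cons e d p ih =>
    by_cases hx : Γ.endpt e d ∈ p.srcs
    · obtain ⟨A, B, hp, hB, -⟩ := exists_split_src p _ hx
      exact ⟨Γ.endpt e d, Walk.nil _, Walk.cons e d A, B,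
        by rw [nil_append, cons_append, ← hp], by simp, hB⟩
    · have h' : ¬ p.srcs.Nodup := by
        intro hn
        exact h (by simp [hn, hx])
      obtain ⟨z, A, L, C, hp, hL, hC⟩ := ih h'
      exact ⟨z, Walk.cons e d A, L, C, by rw [cons_append, ← hp], hL, hC⟩

/-- Decomposition of a walk with a repeated vertex. -/
theorem decomp_of_verts_dup {u v : V} (W : Γ.Walk u v) (h : ¬ W.verts.Nodup) :
    ∃ (z : V) (A : Γ.Walk u z) (L : Γ.Walk z z) (C : Γ.Walk z v),
      W = A.append (L.append C) ∧ L.edges ≠ [] := by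
  by_cases hs : W.srcs.Nodup
  · have hv : v ∈ W.srcs := by
      by_contra hv
      rw [verts_eq_srcs_append] at h
      refine h ?_
      rw [List.nodup_append']
      exact ⟨hs, List.nodup_singleton v,
        by intro a ha hb; rw [List.mem_singleton] at hb; subst hb; exact hv ha⟩
    obtain ⟨A, B, hW, hB, -⟩ := exists_split_src W v hv
    exact ⟨v, A, B, Walk.nil v, by rw [append_nil, ← hW], hB⟩
  · obtain ⟨z, A, L, C, hW, hL, hC⟩ := decomp_of_srcs_dup W hs
    exact ⟨z, A, L, C, hW, hL⟩

/-- Decomposition of a walk with a repeated edge, relative to a fixed group. -/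
theorem decomp_of_edges_dup (hω : Γ.IsCompatible ω) {u v : V} (W : Γ.Walk u v)
    (h : ¬ W.edges.Nodup) :
    (∃ (W' : Γ.Walk u v) (e : E), W'.edges.length + 2 = W.edges.length ∧ W'.sgn = W.sgn ∧
        W'.tensionSum ω f = W.tensionSum ω f ∧ W.edgeSum f = W'.edgeSum f + (f e + f e)) ∨
    (∃ (z : V) (A : Γ.Walk u z) (L : Γ.Walk z z) (C : Γ.Walk z v),
      W = A.append (L.append C) ∧ L.edges ≠ [] ∧ C.edges ≠ []) := by
  have hex : ∃ e, 2 ≤ W.edges.count e := by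
    by_contra hc
    push_neg at hc
    exact h (List.nodup_iff_count_le_one.mpr fun a => by have := hc a; omega)
  obtain ⟨e, h2⟩ := hex
  have hm : e ∈ W.edges := by
    by_contra hm
    rw [List.count_eq_zero_of_not_mem hm] at h2; omega
  obtain ⟨d, A, B, hW, hA⟩ := exists_split_edge W e hm
  have hmB : e ∈ B.edges := by
    have hcA : W.edges.count e = (Walk.cons e d B).edges.count e := by
      rw [hW, edges_append, List.count_append, List.count_eq_zero_of_not_mem hA, zero_add]
    rw [hcA] at h2
    simp only [edges_cons, List.count_cons_self] at h2
    by_contra hm'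
    rw [List.count_eq_zero_of_not_mem hm'] at h2; omega
  obtain ⟨d', A', B₂, hB, -⟩ := exists_split_edge B e hmB
  by_cases hd : d' = d
  · subst hd
    right
    exact ⟨Γ.endpt e d', A, Walk.cons e d' A', Walk.cons e d' B₂,
      by rw [hW, hB, cons_append], by simp, by simp⟩
  · have hd' : d' = !d := by cases d <;> cases d' <;> simp_all
    subst hd'
    by_cases hA' : A'.edges = []
    · left
      have hAnil : A' = Walk.nil _ := eq_nil_of_edges_nil A' hA'
      subst hAnil
      rw [hW, hB, nil_append]
      refine ⟨A.append (B₂.copy (congrArg (Γ.endpt e) (Bool.not_not d)) rfl), e, ?_, ?_, ?_, ?_⟩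
      · simp; omega
      · rw [sgn_append, sgn_append, sgn_backtrack, sgn_copy]
      · rw [tensionSum_append, tensionSum_append, tensionSum_backtrack hω, tensionSum_copy]
      · rw [edgeSum_append, edgeSum_append, edgeSum_copy]
        simp [edgeSum]
        abel
    · right
      refine ⟨Γ.endpt e (!d), A.append (Walk.cons e d (Walk.nil _)), A',
        Walk.cons e (!d) B₂, ?_, hA', by simp⟩
      rw [hW, hB, append_assoc]
      rfl

end Walk

end SGraph

end Aux3
noncomputable section Aux4

namespace SGraph

variable {V E : Type*} {Γ : SGraph V E}

theorem omega_eq_of_sign_neg {ω : E → Bool → ℤˣ} (hω : Γ.IsCompatible ω) (e : E)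
    (h : Γ.sign e = -1) (d d' : Bool) : ω e d = ω e d' := by
  have h2 := hω e
  rw [h] at h2
  have h3 : ω e true * ω e false = 1 := by
    rcases Int.units_eq_one_or (ω e true) with h4 | h4 <;>
      rcases Int.units_eq_one_or (ω e false) with h5 | h5 <;>
        rw [h4, h5] at h2 ⊢ <;> first | rfl | (exfalso; revert h2; decide)
  have h6 : ω e true = ω e false := by
    rcases Int.units_eq_one_or (ω e true) with h4 | h4 <;>
      rcases Int.units_eq_one_or (ω e false) with h5 | h5 <;>
        rw [h4, h5] at h3 ⊢ <;> first | rfl | (exfalso; revert h3; decide)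
  cases d <;> cases d' <;> simp [h6]

theorem isCircuitWalk_of_basic {v : V} (W : Γ.Walk v v) (h : Γ.IsBasicCircuitWalk W) :
    Γ.IsCircuitWalk W :=
  ⟨v, W, Walk.nil v, rfl, by rwa [Walk.append_nil]⟩

namespace Walk

variable {G : Type*} [AddCommGroup G] {ω : E → Bool → ℤˣ} {f : E → G}

theorem loop_structure {x : V} (B : Γ.Walk x x) (hnd : B.srcs.Nodup) (e : E) (he : e ∈ B.edges)
    (hx : ∀ d' : Bool, Γ.endpt e d' = x) :
    ∃ d : Bool, B.tensionSum ω f = (ω e d : ℤ) • f e ∧ B.sgn = Γ.sign e := by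
  obtain ⟨d, A, B₂, hB, -⟩ := exists_split_edge B e he
  rw [hB] at hnd
  rw [srcs_append, srcs_cons] at hnd
  have hAnil : A.edges = [] := by
    by_contra hA
    obtain ⟨t, ht⟩ := exists_srcs_cons A hA
    refine (List.nodup_append'.mp hnd).2.2 ?_ (List.mem_cons_self)
    rw [ht, hx d]
    exact List.mem_cons_self
  have hB₂nil : B₂.edges = [] := by
    by_contra hA
    obtain ⟨t, ht⟩ := exists_srcs_cons B₂ hA
    have h2 := (List.nodup_append'.mp hnd).2.1
    rw [ht, List.nodup_cons] at h2
    refine h2.1 ?_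
    rw [hx d, hx (!d)]
    exact List.mem_cons_self
  refine ⟨d, ?_, ?_⟩
  · rw [hB, tensionSum_append, tensionSum_cons, tensionSum_of_edges_nil A hAnil,
      tensionSum_of_edges_nil B₂ hB₂nil, sgn_of_edges_nil A hAnil]
    simp
  · rw [hB, sgn_append, sgn_cons, sgn_of_edges_nil A hAnil, sgn_of_edges_nil B₂ hB₂nil]
    simp

end Walk

end SGraph

section QuotientLemmas

variable {G : Type*} [AddCommGroup G]

theorem two_mem_twoG (x : G) : x + x ∈ twoG G := ⟨x, rfl⟩

theorem mem_twoG_iff (g : G) :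
    g ∈ twoG G ↔ (QuotientAddGroup.mk' (twoG G) g = 0) := by
  rw [QuotientAddGroup.mk'_apply, QuotientAddGroup.eq_zero_iff]

theorem qg_add_self (y : G ⧸ twoG G) : y + y = 0 := by
  induction y using QuotientAddGroup.induction_on with
  | H g => exact (QuotientAddGroup.eq_zero_iff _).mpr (two_mem_twoG g)

theorem qg_units_smul (u : ℤˣ) (g : G) :
    QuotientAddGroup.mk' (twoG G) ((u : ℤ) • g) = QuotientAddGroup.mk' (twoG G) g := by
  rcases Int.units_eq_one_or u with h | h
  · rw [h]; simp
  · rw [h]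
    simp only [Units.val_neg, Units.val_one, neg_smul, one_smul, map_neg]
    exact neg_eq_of_add_eq_zero_left (qg_add_self _)

namespace SGraph

variable {V E : Type*} {Γ : SGraph V E} {ω : E → Bool → ℤˣ} {f : E → G}

theorem qg_tensionSum_eq_edgeSum : ∀ {u v : V} (W : Γ.Walk u v),
    QuotientAddGroup.mk' (twoG G) (W.tensionSum ω f)
      = QuotientAddGroup.mk' (twoG G) (W.edgeSum f) := by
  intro u v W
  induction W with
  | nil => simp
  | cons e d p ih =>
    rw [Walk.tensionSum_cons, Walk.edgeSum_cons, map_add, map_add, qg_units_smul,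
      qg_units_smul, ih]

end SGraph

end QuotientLemmas

end Aux4
noncomputable section Aux5

section USolve

variable {G : Type*} [AddCommGroup G]

theorem u_smul_smul (u : ℤˣ) (a : G) : (u : ℤ) • ((u : ℤ) • a) = a := by
  rw [smul_smul, ← Units.val_mul, Int.units_mul_self, Units.val_one, one_smul]

theorem u_solve₁ (u : ℤˣ) (a b : G) (h : a + (u : ℤ) • b = 0) : b = -((u : ℤ) • a) := by
  have h2 : (u : ℤ) • b = -a := eq_neg_of_add_eq_zero_right h
  rw [← u_smul_smul u b, h2, smul_neg]

theorem u_solve₂ (u : ℤˣ) (a b c : G) (h : a + (u : ℤ) • b = c) : b = (u : ℤ) • (c - a) := by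
  have h2 : (u : ℤ) • b = c - a := eq_sub_of_add_eq' h
  rw [← u_smul_smul u b, h2]

end USolve

namespace SGraph

variable {V E : Type*} {Γ : SGraph V E}

namespace Walk

variable {G : Type*} [AddCommGroup G] {ω : E → Bool → ℤˣ} {f : E → G}

theorem exists_verts_cons {u v : V} (W : Γ.Walk u v) : ∃ t, W.verts = u :: t := by
  cases W with
  | nil => exact ⟨[], rfl⟩
  | cons e d p => exact ⟨p.verts, rfl⟩

theorem edges_eq_steps_map {u v : V} (W : Γ.Walk u v) :
    W.edges = W.steps.map Prod.fst := by
  induction W with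
  | nil => rfl
  | cons e d p ih => simp [ih]

theorem sgn_of_isReverseOf {u v : V} {P : Γ.Walk u v} {Q : Γ.Walk v u}
    (h : Q.IsReverseOf P) : Q.sgn = P.sgn := by
  have hedges : Q.edges = P.edges.reverse := by
    calc Q.edges = (P.steps.reverse.map fun s => (s.1, !s.2)).map Prod.fst := by
          rw [edges_eq_steps_map, h]
      _ = P.steps.reverse.map Prod.fst := by rw [List.map_map]; rfl
      _ = (P.steps.map Prod.fst).reverse := (List.map_reverse)
      _ = P.edges.reverse := by rw [edges_eq_steps_map]
  rw [sgn_eq_prod, sgn_eq_prod, hedges, List.map_reverse, List.prod_reverse]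

theorem exists_split_at_vert {x y : V} (P : Γ.Walk x y) (z : V) (hz : z ∈ P.verts) :
    ∃ (P₁ : Γ.Walk x z) (P₂ : Γ.Walk z y), P = P₁.append P₂ := by
  rw [verts_eq_srcs_append] at hz
  rcases List.mem_append.mp hz with h | h
  · obtain ⟨P₁, P₂, hP, -, -⟩ := exists_split_src P z h
    exact ⟨P₁, P₂, hP⟩
  · simp at h
    subst h
    exact ⟨P, Walk.nil _, (append_nil P).symm⟩

theorem verts_not_nodup_of_loop {x y : V} (P : Γ.Walk x y) (e : E) (he : e ∈ P.edges)
    (hl : Γ.endpt e true = Γ.endpt e false) : ¬ P.verts.Nodup := by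
  intro hnd
  obtain ⟨d, A, B₂, hP, -⟩ := exists_split_edge P e he
  obtain ⟨t, ht⟩ := exists_verts_cons B₂
  rw [hP, verts_append, verts_cons, ht] at hnd
  have h2 := (List.nodup_append'.mp hnd).2.1
  rw [List.nodup_cons] at h2
  refine h2.1 ?_
  have hee : Γ.endpt e d = Γ.endpt e (!d) := by
    cases d
    · exact hl.symm
    · exact hl
  rw [hee]
  exact List.mem_cons_self

end Walk

theorem sgn_of_basic {v : V} {W : Γ.Walk v v} (h : Γ.IsBasicCircuitWalk W) : W.sgn = 1 := by
  rcases h with h | ⟨C₁, C₂, ⟨⟨-, h1⟩, ⟨-, h2⟩, -, -⟩, rfl⟩ |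
    ⟨w, C₁, P, C₂, Q, ⟨⟨-, h1⟩, ⟨-, h2⟩, -, -⟩, hQ, rfl⟩
  · exact h.2
  · rw [Walk.sgn_append, h1, h2]; rfl
  · rw [Walk.sgn_append, Walk.sgn_append, Walk.sgn_append, h1, h2,
      Walk.sgn_of_isReverseOf hQ]
    rcases Int.units_eq_one_or P.sgn with h | h <;> rw [h] <;> rfl

theorem sgn_of_circuitWalk {v : V} {W : Γ.Walk v v} (h : Γ.IsCircuitWalk W) : W.sgn = 1 := by
  obtain ⟨u, A, B, rfl, hb⟩ := h
  have := sgn_of_basic hb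
  rw [Walk.sgn_append] at this ⊢
  rw [mul_comm]
  exact this

end SGraph

end Aux5

noncomputable section Aux5b

namespace SGraph

variable {V E : Type*} {Γ : SGraph V E}

namespace Walk

@[simp] theorem edges_revSingle (e : E) (d : Bool) :
    (revSingle (Γ := Γ) e d).edges = [e] := by cases d <;> rfl

theorem edges_reverse : ∀ {u v : V} (p : Γ.Walk u v), p.reverse.edges = p.edges.reverse := by
  intro u v p
  induction p with
  | nil => rfl
  | cons e d p ih => simp [reverse, ih]

theorem ne_of_path {x y : V} (P : Γ.Walk x y) (hne : P.edges ≠ []) (hv : P.verts.Nodup) :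
    x ≠ y := by
  intro h
  subst h
  have hx := base_mem_srcs P hne
  rw [verts_eq_srcs_append] at hv
  exact (List.nodup_append'.mp hv).2.2 hx (by simp)

end Walk

end SGraph

end Aux5b
noncomputable section Aux6

namespace SGraph

open Walk

variable {V E : Type*} {Γ : SGraph V E} {G : Type*} [AddCommGroup G]
variable {ω : E → Bool → ℤˣ} {f : E → G}

theorem cprev (hω : Γ.IsCompatible ω)
    (hT : ∀ (v : V) (W : Γ.Walk v v), Γ.IsCircuitWalk W → W.tensionSum ω f = 0)
    (N : ℕ)
    (HM : ∀ {v : V} (W : Γ.Walk v v), W.edges.length < N → W.sgn = 1 → W.tensionSum ω f = 0) :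
    ∀ (μ : ℕ), μ ≤ N → ∀ (k : ℕ) {x y : V} (B : Γ.Walk x x) (P : Γ.Walk x y) (D : Γ.Walk y y),
      B.sgn = -1 → D.sgn = -1 →
      B.edges.length + D.edges.length + P.edges.length = μ →
      B.edges.length + D.edges.length = k →
      B.tensionSum ω f =
        (2 : ℤ) • P.tensionSum ω f + (P.sgn : ℤ) • D.tensionSum ω f := by
  intro μ
  induction μ using Nat.strong_induction_on with
  | _ μ ihμ =>
  intro hμN k
  induction k using Nat.strong_induction_on with
  | _ k ihk =>
  intro x y B P D hB hD hμ hk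
  have hBne : B.edges ≠ [] := edges_ne_nil_of_sgn_neg B hB
  have hDne : D.edges ≠ [] := edges_ne_nil_of_sgn_neg D hD
  have hb1 : 1 ≤ B.edges.length := List.length_pos_iff.mpr hBne
  have hd1 : 1 ≤ D.edges.length := List.length_pos_iff.mpr hDne
  by_cases hBnd : B.srcs.Nodup ∧ B.edges.Nodup
  case neg =>
    have hdec : (∃ (B' : Γ.Walk x x) (e : E), B'.edges.length + 2 = B.edges.length ∧
        B'.sgn = B.sgn ∧ B'.tensionSum ω f = B.tensionSum ω f ∧
        B.edgeSum f = B'.edgeSum f + (f e + f e)) ∨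
        (∃ (z : V) (A : Γ.Walk x z) (L : Γ.Walk z z) (C : Γ.Walk z x),
          B = A.append (L.append C) ∧ L.edges ≠ [] ∧ C.edges ≠ []) := by
      by_cases hs : B.srcs.Nodup
      · exact decomp_of_edges_dup hω B (fun he => hBnd ⟨hs, he⟩)
      · exact Or.inr (decomp_of_srcs_dup B hs)
    rcases hdec with ⟨B', e0, hlen, hsgn', hT', -⟩ | ⟨z, A₁, L, C₁, hBdec, hLne, hC₁ne⟩
    · have key := ihμ (μ - 2) (by omega) (by omega)
        (B'.edges.length + D.edges.length) B' P D
        (by rw [hsgn']; exact hB) hD (by omega) rfl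
      rw [← hT']
      exact key
    · subst hBdec
      rw [sgn_append, sgn_append] at hB
      simp only [edges_append, List.length_append] at hμ hk
      have hL1 : 1 ≤ L.edges.length := List.length_pos_iff.mpr hLne
      have hC1 : 1 ≤ C₁.edges.length := List.length_pos_iff.mpr hC₁ne
      rcases Int.units_eq_one_or L.sgn with hLs | hLs
      · rw [hLs, one_mul] at hB
        have hTL : L.tensionSum ω f = 0 := HM L (by omega) hLs
        have key := ihμ (A₁.edges.length + C₁.edges.length + D.edges.length + P.edges.length)
          (by omega) (by omega) (A₁.edges.length + C₁.edges.length + D.edges.length)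
          (A₁.append C₁) P D (by rw [sgn_append]; exact hB) hD
          (by simp only [edges_append, List.length_append]; try omega)
          (by simp only [edges_append, List.length_append]; try omega)
        rw [← key]
        simp only [tensionSum_append, hTL, hLs, Units.val_one, one_smul, smul_zero,
          add_zero, zero_add, smul_add]
      · have hac : A₁.sgn * C₁.sgn = 1 := by
          rcases Int.units_eq_one_or A₁.sgn with h1'|h1' <;>
            rcases Int.units_eq_one_or C₁.sgn with h2'|h2' <;>
              rw [h1', hLs, h2'] at hB <;> rw [h1', h2'] <;>
                first
                | rfl
                | exact absurd hB (by decide)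
        have hACT := HM (A₁.append C₁)
          (by simp only [edges_append, List.length_append]; try omega)
          (by rw [sgn_append]; exact hac)
        rw [tensionSum_append] at hACT
        have hTA := eq_neg_of_add_eq_zero_left hACT
        have key : L.tensionSum ω f = (2:ℤ) • (C₁.append P).tensionSum ω f +
            ((C₁.append P).sgn : ℤ) • D.tensionSum ω f := by
          rcases Nat.eq_zero_or_pos A₁.edges.length with hA0 | hA0
          · exact ihk (L.edges.length + D.edges.length) (by omega) L (C₁.append P) D hLs hD
              (by simp only [edges_append, List.length_append]; try omega)
              rfl
          · exact ihμ (μ - A₁.edges.length) (by omega) (by omega)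
              (L.edges.length + D.edges.length) L (C₁.append P) D hLs hD
              (by simp only [edges_append, List.length_append]; try omega) rfl
        simp only [tensionSum_append, sgn_append] at key ⊢
        rw [key, hTA]
        rcases Int.units_eq_one_or A₁.sgn with h1'|h1' <;>
          rcases Int.units_eq_one_or C₁.sgn with h2'|h2' <;>
            rw [h1', h2'] at hac <;>
              first
              | exact absurd hac (by decide)
              | (simp only [h1', h2', hLs, Units.val_one, Units.val_neg, Units.val_mul,
                  one_smul, neg_smul, smul_neg, neg_neg, one_mul, neg_mul, mul_one, mul_neg,
                  mul_smul, smul_add, smul_sub]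
                 try abel)
  by_cases hDnd : D.srcs.Nodup ∧ D.edges.Nodup
  case neg =>
    have hdec : (∃ (D' : Γ.Walk y y) (e : E), D'.edges.length + 2 = D.edges.length ∧
        D'.sgn = D.sgn ∧ D'.tensionSum ω f = D.tensionSum ω f ∧
        D.edgeSum f = D'.edgeSum f + (f e + f e)) ∨
        (∃ (z : V) (A : Γ.Walk y z) (L : Γ.Walk z z) (C : Γ.Walk z y),
          D = A.append (L.append C) ∧ L.edges ≠ [] ∧ C.edges ≠ []) := by
      by_cases hs : D.srcs.Nodup
      · exact decomp_of_edges_dup hω D (fun he => hDnd ⟨hs, he⟩)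
      · exact Or.inr (decomp_of_srcs_dup D hs)
    rcases hdec with ⟨D', e0, hlen, hsgn', hT', -⟩ | ⟨z, A₂, L, C₂, hDdec, hLne, hC₂ne⟩
    · have key := ihμ (μ - 2) (by omega) (by omega)
        (B.edges.length + D'.edges.length) B P D'
        hB (by rw [hsgn']; exact hD) (by omega) rfl
      rw [key, hT']
    · subst hDdec
      rw [sgn_append, sgn_append] at hD
      simp only [edges_append, List.length_append] at hμ hk
      have hL1 : 1 ≤ L.edges.length := List.length_pos_iff.mpr hLne
      have hC1 : 1 ≤ C₂.edges.length := List.length_pos_iff.mpr hC₂ne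
      rcases Int.units_eq_one_or L.sgn with hLs | hLs
      · rw [hLs, one_mul] at hD
        have hTL : L.tensionSum ω f = 0 := HM L (by omega) hLs
        have key := ihμ (B.edges.length + (A₂.edges.length + C₂.edges.length) + P.edges.length)
          (by omega) (by omega) (B.edges.length + (A₂.edges.length + C₂.edges.length))
          B P (A₂.append C₂) hB (by rw [sgn_append]; exact hD)
          (by simp only [edges_append, List.length_append]; try omega)
          (by simp only [edges_append, List.length_append]; try omega)
        rw [key]
        simp only [tensionSum_append, sgn_append, hTL, hLs, Units.val_one, one_smul,
          smul_zero, add_zero, zero_add, smul_add, Units.val_mul, mul_smul, one_mul]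
      · have hac : A₂.sgn * C₂.sgn = 1 := by
          rcases Int.units_eq_one_or A₂.sgn with h1'|h1' <;>
            rcases Int.units_eq_one_or C₂.sgn with h2'|h2' <;>
              rw [h1', hLs, h2'] at hD <;> rw [h1', h2'] <;>
                first
                | rfl
                | exact absurd hD (by decide)
        have hACT := HM (A₂.append C₂)
          (by simp only [edges_append, List.length_append]; try omega)
          (by rw [sgn_append]; exact hac)
        rw [tensionSum_append] at hACT
        have hTA := eq_neg_of_add_eq_zero_left hACT
        have key := ihμ (B.edges.length + L.edges.length + (P.edges.length + A₂.edges.length))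
          (by omega) (by omega) (B.edges.length + L.edges.length)
          B (P.append A₂) L hB hLs
          (by simp only [edges_append, List.length_append]; try omega)
          rfl
        rw [key]
        simp only [tensionSum_append, sgn_append]
        rw [hTA]
        rcases Int.units_eq_one_or A₂.sgn with h1'|h1' <;>
          rcases Int.units_eq_one_or C₂.sgn with h2'|h2' <;>
            rw [h1', h2'] at hac <;>
              first
              | exact absurd hac (by decide)
              | (simp only [h1', h2', hLs, Units.val_one, Units.val_neg, Units.val_mul,
                  one_smul, neg_smul, smul_neg, neg_neg, one_mul, neg_mul, mul_one, mul_neg,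
                  mul_smul, smul_add, smul_sub]
                 try abel)
  by_cases hPv : P.verts.Nodup
  case neg =>
    obtain ⟨z, A₃, L, C₃, hPdec, hLne⟩ := decomp_of_verts_dup P hPv
    subst hPdec
    simp only [edges_append, List.length_append] at hμ hk
    have hL1 : 1 ≤ L.edges.length := List.length_pos_iff.mpr hLne
    rcases Int.units_eq_one_or L.sgn with hLs | hLs
    · have hTL : L.tensionSum ω f = 0 := HM L (by omega) hLs
      have key := ihμ (B.edges.length + D.edges.length + (A₃.edges.length + C₃.edges.length))
        (by omega) (by omega) (B.edges.length + D.edges.length)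
        B (A₃.append C₃) D hB hD
        (by simp only [edges_append, List.length_append]; try omega) rfl
      rw [key]
      simp only [tensionSum_append, sgn_append, hTL, hLs, Units.val_one, one_smul,
        smul_zero, add_zero, zero_add, smul_add, Units.val_mul, mul_smul, one_mul]
    · have key1 := ihμ (L.edges.length + D.edges.length + C₃.edges.length)
        (by omega) (by omega) (L.edges.length + D.edges.length)
        L C₃ D hLs hD (by omega) rfl
      have key2 := ihμ (B.edges.length + D.edges.length + (A₃.edges.length + C₃.edges.length))
        (by omega) (by omega) (B.edges.length + D.edges.length)
        B (A₃.append C₃) D hB hD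
        (by simp only [edges_append, List.length_append]; try omega) rfl
      rw [key2]
      simp only [tensionSum_append, sgn_append]
      rw [key1]
      rcases Int.units_eq_one_or A₃.sgn with h1'|h1' <;>
        rcases Int.units_eq_one_or C₃.sgn with h2'|h2' <;>
          simp only [h1', h2', hLs, Units.val_one, Units.val_neg, Units.val_mul,
            one_smul, neg_smul, smul_neg, neg_neg, one_mul, neg_mul, mul_one, mul_neg,
            mul_smul, smul_add, smul_sub] <;>
            try abel
  by_cases hzB : ∃ z, z ∈ P.verts ∧ z ∈ B.srcs ∧ z ≠ x
  case pos =>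
    obtain ⟨z, hzP, hzB', hzx⟩ := hzB
    obtain ⟨P₁, P₂, rfl⟩ := exists_split_at_vert P z hzP
    obtain ⟨B₁, B₂, rfl, hB₂ne, -⟩ := exists_split_src B z hzB'
    rw [sgn_append] at hB
    simp only [edges_append, List.length_append] at hμ hk
    have hP₁ne : P₁.edges ≠ [] := fun h => hzx (eq_of_edges_nil P₁ h).symm
    have hP₁1 : 1 ≤ P₁.edges.length := List.length_pos_iff.mpr hP₁ne
    have hB₂1 : 1 ≤ B₂.edges.length := List.length_pos_iff.mpr hB₂ne
    have h1 := ihμ (B₁.edges.length + B₂.edges.length + D.edges.length + P₂.edges.length)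
      (by omega) (by omega) (B₁.edges.length + B₂.edges.length + D.edges.length)
      (B₂.append B₁) P₂ D
      (by rw [sgn_append, mul_comm]; exact hB) hD
      (by simp only [edges_append, List.length_append]; try omega)
      (by simp only [edges_append, List.length_append]; try omega)
    rw [tensionSum_append] at h1
    rcases Int.units_eq_one_or (B₁.sgn * P₁.sgn) with hs | hs
    · have hV := HM (B₁.append P₁.reverse)
        (by simp only [edges_append, List.length_append, edges_reverse,
          List.length_reverse]; omega)
        (by rw [sgn_append, sgn_reverse]; exact hs)
      rw [tensionSum_append, tensionSum_reverse hω] at hV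
      have hTB₁ := eq_neg_of_add_eq_zero_left hV
      have hTB₂ := eq_sub_of_add_eq h1
      simp only [tensionSum_append, sgn_append]
      rw [hTB₂, hTB₁]
      rcases Int.units_eq_one_or B₁.sgn with h1'|h1' <;>
        rcases Int.units_eq_one_or B₂.sgn with h2'|h2' <;>
          rcases Int.units_eq_one_or P₁.sgn with h3'|h3' <;>
            rw [h1', h2'] at hB <;> rw [h1', h3'] at hs <;>
              first
              | exact absurd hB (by decide)
              | exact absurd hs (by decide)
              | (simp only [h1', h2', h3', Units.val_one, Units.val_neg, Units.val_mul,
                  one_smul, neg_smul, smul_neg, neg_neg, one_mul, neg_mul, mul_one, mul_neg,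
                  mul_smul, smul_add, smul_sub]
                 try abel)
    · have hUs : P₁.sgn * B₂.sgn = 1 := by
        rcases Int.units_eq_one_or B₁.sgn with h1'|h1' <;>
          rcases Int.units_eq_one_or B₂.sgn with h2'|h2' <;>
            rcases Int.units_eq_one_or P₁.sgn with h3'|h3' <;>
              rw [h1', h2'] at hB <;> rw [h1', h3'] at hs <;> rw [h3', h2'] <;>
                first
                | rfl
                | exact absurd hB (by decide)
                | exact absurd hs (by decide)
      have hU := HM (P₁.append B₂)
        (by simp only [edges_append, List.length_append]; try omega)
        (by rw [sgn_append]; exact hUs)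
      rw [tensionSum_append] at hU
      have hTB₂ := u_solve₁ _ _ _ hU
      have hTB₁ := u_solve₂ _ _ _ _ h1
      simp only [tensionSum_append, sgn_append]
      rw [hTB₁, hTB₂]
      rcases Int.units_eq_one_or B₁.sgn with h1'|h1' <;>
        rcases Int.units_eq_one_or B₂.sgn with h2'|h2' <;>
          rcases Int.units_eq_one_or P₁.sgn with h3'|h3' <;>
            rw [h1', h2'] at hB <;> rw [h1', h3'] at hs <;>
              first
              | exact absurd hB (by decide)
              | exact absurd hs (by decide)
              | (simp only [h1', h2', h3', Units.val_one, Units.val_neg, Units.val_mul,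
                  one_smul, neg_smul, smul_neg, neg_neg, one_mul, neg_mul, mul_one, mul_neg,
                  mul_smul, smul_add, smul_sub]
                 try abel)
  by_cases hzD : ∃ z, z ∈ P.verts ∧ z ∈ D.srcs ∧ z ≠ y
  case pos =>
    obtain ⟨z, hzP, hzD', hzy⟩ := hzD
    obtain ⟨P₁, P₂, rfl⟩ := exists_split_at_vert P z hzP
    obtain ⟨D₁, D₂, rfl, hD₂ne, -⟩ := exists_split_src D z hzD'
    rw [sgn_append] at hD
    simp only [edges_append, List.length_append] at hμ hk
    have hP₂ne : P₂.edges ≠ [] := fun h => hzy (eq_of_edges_nil P₂ h)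
    have hP₂1 : 1 ≤ P₂.edges.length := List.length_pos_iff.mpr hP₂ne
    have hD₂1 : 1 ≤ D₂.edges.length := List.length_pos_iff.mpr hD₂ne
    have h1 := ihμ (B.edges.length + (D₁.edges.length + D₂.edges.length) + P₁.edges.length)
      (by omega) (by omega) (B.edges.length + (D₁.edges.length + D₂.edges.length))
      B P₁ (D₂.append D₁) hB
      (by rw [sgn_append, mul_comm]; exact hD)
      (by simp only [edges_append, List.length_append]; try omega)
      (by simp only [edges_append, List.length_append]; try omega)
    rcases Int.units_eq_one_or (D₂.sgn * P₂.sgn) with hs | hs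
    · have hV := HM (D₂.append P₂.reverse)
        (by simp only [edges_append, List.length_append, edges_reverse,
          List.length_reverse]; omega)
        (by rw [sgn_append, sgn_reverse]; exact hs)
      rw [tensionSum_append, tensionSum_reverse hω] at hV
      have hTD₂ := eq_neg_of_add_eq_zero_left hV
      rw [h1]
      simp only [tensionSum_append, sgn_append]
      rw [hTD₂]
      rcases Int.units_eq_one_or D₁.sgn with h1'|h1' <;>
        rcases Int.units_eq_one_or D₂.sgn with h2'|h2' <;>
          rcases Int.units_eq_one_or P₂.sgn with h3'|h3' <;>
            rw [h1', h2'] at hD <;> rw [h2', h3'] at hs <;>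
              first
              | exact absurd hD (by decide)
              | exact absurd hs (by decide)
              | (simp only [h1', h2', h3', Units.val_one, Units.val_neg, Units.val_mul,
                  one_smul, neg_smul, smul_neg, neg_neg, one_mul, neg_mul, mul_one, mul_neg,
                  mul_smul, smul_add, smul_sub]
                 try abel)
    · have hUs : P₂.sgn * D₁.sgn = 1 := by
        rcases Int.units_eq_one_or D₁.sgn with h1'|h1' <;>
          rcases Int.units_eq_one_or D₂.sgn with h2'|h2' <;>
            rcases Int.units_eq_one_or P₂.sgn with h3'|h3' <;>
              rw [h1', h2'] at hD <;> rw [h2', h3'] at hs <;> rw [h3', h1'] <;>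
                first
                | rfl
                | exact absurd hD (by decide)
                | exact absurd hs (by decide)
      have hU := HM (P₂.append D₁)
        (by simp only [edges_append, List.length_append]; try omega)
        (by rw [sgn_append]; exact hUs)
      rw [tensionSum_append] at hU
      have hTD₁ := u_solve₁ _ _ _ hU
      rw [h1]
      simp only [tensionSum_append, sgn_append]
      rw [hTD₁]
      rcases Int.units_eq_one_or D₁.sgn with h1'|h1' <;>
        rcases Int.units_eq_one_or D₂.sgn with h2'|h2' <;>
          rcases Int.units_eq_one_or P₂.sgn with h3'|h3' <;>
            rw [h1', h2'] at hD <;> rw [h2', h3'] at hs <;>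
              first
              | exact absurd hD (by decide)
              | exact absurd hs (by decide)
              | (simp only [h1', h2', h3', Units.val_one, Units.val_neg, Units.val_mul,
                  one_smul, neg_smul, smul_neg, neg_neg, one_mul, neg_mul, mul_one, mul_neg,
                  mul_smul, smul_add, smul_sub]
                 try abel)
  by_cases hPne : P.edges = []
  case neg =>
    by_cases hsh : ∃ z, z ∈ B.srcs ∧ z ∈ D.srcs
    case pos =>
      obtain ⟨z, hzB', hzD'⟩ := hsh
      obtain ⟨B₁, B₂, rfl, hB₂ne, -⟩ := exists_split_src B z hzB'
      obtain ⟨D₁, D₂, rfl, hD₂ne, -⟩ := exists_split_src D z hzD'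
      rw [sgn_append] at hB hD
      simp only [edges_append, List.length_append] at hμ hk
      have hP1 : 1 ≤ P.edges.length := List.length_pos_iff.mpr hPne
      have hD₂1 : 1 ≤ D₂.edges.length := List.length_pos_iff.mpr hD₂ne
      have hB₂1 : 1 ≤ B₂.edges.length := List.length_pos_iff.mpr hB₂ne
      have hxyne : x ≠ y := ne_of_path P hPne hPv
      have hBD1 : 1 ≤ B₁.edges.length + D₁.edges.length := by
        by_contra hc
        push_neg at hc
        have e1 : x = z := eq_of_edges_nil B₁ (List.length_eq_zero_iff.mp (by omega))
        have e2 : y = z := eq_of_edges_nil D₁ (List.length_eq_zero_iff.mp (by omega))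
        exact hxyne (e1.trans e2.symm)
      have h1 := ihμ (B₁.edges.length + B₂.edges.length + (D₁.edges.length + D₂.edges.length))
        (by omega) (by omega)
        (B₁.edges.length + B₂.edges.length + (D₁.edges.length + D₂.edges.length))
        (B₂.append B₁) (Walk.nil z) (D₂.append D₁)
        (by rw [sgn_append, mul_comm]; exact hB) (by rw [sgn_append, mul_comm]; exact hD)
        (by simp only [edges_append, List.length_append, edges_nil, List.length_nil]; omega)
        (by simp only [edges_append, List.length_append]; try omega)
      rw [tensionSum_nil, sgn_nil, smul_zero, Units.val_one, one_smul, zero_add,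
        tensionSum_append, tensionSum_append] at h1
      have hTB₁ := u_solve₂ _ _ _ _ h1
      rcases Int.units_eq_one_or (B₂.sgn * (P.sgn * D₁.sgn)) with hs | hs
      · have hM := HM (B₂.append (P.append D₁))
          (by simp only [edges_append, List.length_append]; try omega)
          (by rw [sgn_append, sgn_append]; exact hs)
        rw [tensionSum_append, tensionSum_append] at hM
        have hTB₂ := eq_neg_of_add_eq_zero_left hM
        simp only [tensionSum_append, sgn_append]
        rw [hTB₁, hTB₂]
        rcases Int.units_eq_one_or B₁.sgn with h1'|h1' <;>
          rcases Int.units_eq_one_or B₂.sgn with h2'|h2' <;>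
            rcases Int.units_eq_one_or D₁.sgn with h3'|h3' <;>
              rcases Int.units_eq_one_or D₂.sgn with h4'|h4' <;>
                rcases Int.units_eq_one_or P.sgn with h5'|h5' <;>
                  rw [h1', h2'] at hB <;> rw [h3', h4'] at hD <;>
                    rw [h2', h5', h3'] at hs <;>
                      first
                      | exact absurd hB (by decide)
                      | exact absurd hD (by decide)
                      | exact absurd hs (by decide)
                      | (simp only [h1', h2', h3', h4', h5', Units.val_one, Units.val_neg,
                          Units.val_mul, one_smul, neg_smul, smul_neg, neg_neg, one_mul,
                          neg_mul, mul_one, mul_neg, mul_smul, smul_add, smul_sub]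
                         try abel)
      · have hs2 : B₂.sgn * (P.sgn * D₂.sgn) = 1 := by
          rcases Int.units_eq_one_or B₂.sgn with h2'|h2' <;>
            rcases Int.units_eq_one_or D₁.sgn with h3'|h3' <;>
              rcases Int.units_eq_one_or D₂.sgn with h4'|h4' <;>
                rcases Int.units_eq_one_or P.sgn with h5'|h5' <;>
                  rw [h3', h4'] at hD <;> rw [h2', h5', h3'] at hs <;>
                    rw [h2', h5', h4'] <;>
                      first
                      | rfl
                      | exact absurd hD (by decide)
                      | exact absurd hs (by decide)
        have hM := HM (B₂.append (P.append D₂.reverse))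
          (by simp only [edges_append, List.length_append, edges_reverse,
            List.length_reverse]; omega)
          (by rw [sgn_append, sgn_append, sgn_reverse]; exact hs2)
        rw [tensionSum_append, tensionSum_append, tensionSum_reverse hω] at hM
        have hTB₂ := eq_neg_of_add_eq_zero_left hM
        simp only [tensionSum_append, sgn_append]
        rw [hTB₁, hTB₂]
        rcases Int.units_eq_one_or B₁.sgn with h1'|h1' <;>
          rcases Int.units_eq_one_or B₂.sgn with h2'|h2' <;>
            rcases Int.units_eq_one_or D₁.sgn with h3'|h3' <;>
              rcases Int.units_eq_one_or D₂.sgn with h4'|h4' <;>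
                rcases Int.units_eq_one_or P.sgn with h5'|h5' <;>
                  rw [h1', h2'] at hB <;> rw [h3', h4'] at hD <;>
                    rw [h2', h5', h3'] at hs <;>
                      first
                      | exact absurd hB (by decide)
                      | exact absurd hD (by decide)
                      | exact absurd hs (by decide)
                      | (simp only [h1', h2', h3', h4', h5', Units.val_one, Units.val_neg,
                          Units.val_mul, one_smul, neg_smul, smul_neg, neg_neg, one_mul,
                          neg_mul, mul_one, mul_neg, mul_smul, smul_add, smul_sub]
                         try abel)
    case neg =>
      -- loose handcuff
      push_neg at hzB hzD hsh
      have hPB : ∀ z ∈ P.verts, z ∈ B.srcs → z = x := fun z h1 h2 => hzB z h1 h2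
      have hPD : ∀ z ∈ P.verts, z ∈ D.srcs → z = y := fun z h1 h2 => hzD z h1 h2
      have hPE : ∀ e ∈ P.edges, e ∉ B.edges ∧ e ∉ D.edges := by
        intro e he
        constructor
        · intro heB
          have e1 : Γ.endpt e true = x := hPB _ (endpts_mem_verts P e he).1
            (mem_srcs_of_mem_verts B hBne (endpts_mem_verts B e heB).1)
          have e2 : Γ.endpt e false = x := hPB _ (endpts_mem_verts P e he).2
            (mem_srcs_of_mem_verts B hBne (endpts_mem_verts B e heB).2)
          exact (verts_not_nodup_of_loop P e he (e1.trans e2.symm)) hPv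
        · intro heD
          have e1 : Γ.endpt e true = y := hPD _ (endpts_mem_verts P e he).1
            (mem_srcs_of_mem_verts D hDne (endpts_mem_verts D e heD).1)
          have e2 : Γ.endpt e false = y := hPD _ (endpts_mem_verts P e he).2
            (mem_srcs_of_mem_verts D hDne (endpts_mem_verts D e heD).2)
          exact (verts_not_nodup_of_loop P e he (e1.trans e2.symm)) hPv
      have hlh : Γ.IsLooseHandcuff B P D :=
        ⟨⟨⟨hBne, hBnd.1, hBnd.2⟩, hB⟩, ⟨⟨hDne, hDnd.1, hDnd.2⟩, hD⟩, ⟨hPne, hPv⟩,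
          hsh, hPB, hPD, hPE⟩
      have hcw : Γ.IsCircuitWalk (B.append (P.append (D.append P.reverse))) :=
        isCircuitWalk_of_basic _
          (Or.inr (Or.inr ⟨y, B, P, D, P.reverse, hlh, isReverseOf_reverse P, rfl⟩))
      have h0 := hT x _ hcw
      rw [tensionSum_append, tensionSum_append, tensionSum_append,
        tensionSum_reverse hω, hB, hD] at h0
      have h1 := eq_neg_of_add_eq_zero_left h0
      rw [h1]
      rcases Int.units_eq_one_or P.sgn with hp | hp <;>
        simp only [hp, Units.val_one, Units.val_neg, one_smul, neg_smul, smul_neg,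
          neg_neg, smul_add, smul_sub, two_smul] <;> abel
  case pos =>
    have hxy : x = y := eq_of_edges_nil P hPne
    subst hxy
    obtain rfl : P = Walk.nil x := eq_nil_of_edges_nil P hPne
    rw [tensionSum_nil, sgn_nil, smul_zero, Units.val_one, one_smul, zero_add]
    by_cases hsh : ∃ z, z ∈ B.srcs ∧ z ∈ D.srcs ∧ z ≠ x
    case pos =>
      obtain ⟨z, hzB', hzD', hzx⟩ := hsh
      obtain ⟨B₁, B₂, rfl, hB₂ne, -⟩ := exists_split_src B z hzB'
      obtain ⟨D₁, D₂, rfl, hD₂ne, -⟩ := exists_split_src D z hzD'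
      rw [sgn_append] at hB hD
      rw [edges_append, List.length_append] at hμ
      rw [edges_append, List.length_append] at hμ
      have hB₁ne : B₁.edges ≠ [] := fun h => hzx (eq_of_edges_nil B₁ h).symm
      have hD₁ne : D₁.edges ≠ [] := fun h => hzx (eq_of_edges_nil D₁ h).symm
      have hB₁1 : 1 ≤ B₁.edges.length := List.length_pos_iff.mpr hB₁ne
      have hD₁1 : 1 ≤ D₁.edges.length := List.length_pos_iff.mpr hD₁ne
      have hB₂1 : 1 ≤ B₂.edges.length := List.length_pos_iff.mpr hB₂ne
      have hD₂1 : 1 ≤ D₂.edges.length := List.length_pos_iff.mpr hD₂ne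
      rw [tensionSum_append, tensionSum_append]
      rcases Int.units_eq_one_or (B₂.sgn * D₁.sgn) with hs | hs
      · have hX := HM (B₂.append D₁)
          (by rw [edges_append, List.length_append]; try omega)
          (by rw [sgn_append]; exact hs)
        have hYs : D₂.sgn * B₁.sgn = 1 := by
          rcases Int.units_eq_one_or B₁.sgn with h1|h1 <;>
            rcases Int.units_eq_one_or B₂.sgn with h2|h2 <;>
              rcases Int.units_eq_one_or D₁.sgn with h3|h3 <;>
                rcases Int.units_eq_one_or D₂.sgn with h4|h4 <;>
                  rw [h1, h2] at hB <;> rw [h3, h4] at hD <;> rw [h2, h3] at hs <;>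
                    rw [h1, h4] <;>
                      first
                      | rfl
                      | exact absurd hB (by decide)
                      | exact absurd hD (by decide)
                      | exact absurd hs (by decide)
        have hY := HM (D₂.append B₁)
          (by rw [edges_append, List.length_append]; try omega)
          (by rw [sgn_append]; exact hYs)
        rw [tensionSum_append] at hX hY
        have hTD₁ := u_solve₁ _ _ _ hX
        have hTB₁ := u_solve₁ _ _ _ hY
        rw [hTD₁, hTB₁]
        rcases Int.units_eq_one_or B₁.sgn with h1|h1 <;>
          rcases Int.units_eq_one_or B₂.sgn with h2|h2 <;>
            rcases Int.units_eq_one_or D₁.sgn with h3|h3 <;>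
              rcases Int.units_eq_one_or D₂.sgn with h4|h4 <;>
                rw [h1, h2] at hB <;> rw [h3, h4] at hD <;> rw [h2, h3] at hs <;>
                  first
                  | exact absurd hB (by decide)
                  | exact absurd hD (by decide)
                  | exact absurd hs (by decide)
                  | (simp only [h1, h2, h3, h4, Units.val_one, Units.val_neg, one_smul,
                      neg_smul, smul_neg, neg_neg]
                     try abel)
      · have hXs : B₂.sgn * D₂.sgn = 1 := by
          rcases Int.units_eq_one_or B₂.sgn with h2|h2 <;>
            rcases Int.units_eq_one_or D₁.sgn with h3|h3 <;>
              rcases Int.units_eq_one_or D₂.sgn with h4|h4 <;>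
                rw [h3, h4] at hD <;> rw [h2, h3] at hs <;> rw [h2, h4] <;>
                  first
                  | rfl
                  | exact absurd hD (by decide)
                  | exact absurd hs (by decide)
        have hYs : B₁.sgn * D₁.sgn = 1 := by
          rcases Int.units_eq_one_or B₁.sgn with h1|h1 <;>
            rcases Int.units_eq_one_or B₂.sgn with h2|h2 <;>
              rcases Int.units_eq_one_or D₁.sgn with h3|h3 <;>
                rw [h1, h2] at hB <;> rw [h2, h3] at hs <;> rw [h1, h3] <;>
                  first
                  | rfl
                  | exact absurd hB (by decide)
                  | exact absurd hs (by decide)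
        have hX := HM (B₂.append D₂.reverse)
          (by rw [edges_append, List.length_append, edges_reverse, List.length_reverse]; omega)
          (by rw [sgn_append, sgn_reverse]; exact hXs)
        have hY := HM (B₁.reverse.append D₁)
          (by rw [edges_append, List.length_append, edges_reverse, List.length_reverse]; omega)
          (by rw [sgn_append, sgn_reverse]; exact hYs)
        rw [tensionSum_append, tensionSum_reverse hω] at hX
        rw [tensionSum_append, tensionSum_reverse hω, sgn_reverse] at hY
        have hTB₂ := eq_neg_of_add_eq_zero_left hX
        have hTD₁ := u_solve₁ _ _ _ hY
        rw [hTB₂, hTD₁]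
        rcases Int.units_eq_one_or B₁.sgn with h1|h1 <;>
          rcases Int.units_eq_one_or B₂.sgn with h2|h2 <;>
            rcases Int.units_eq_one_or D₁.sgn with h3|h3 <;>
              rcases Int.units_eq_one_or D₂.sgn with h4|h4 <;>
                rw [h1, h2] at hB <;> rw [h3, h4] at hD <;> rw [h2, h3] at hs <;>
                  first
                  | exact absurd hB (by decide)
                  | exact absurd hD (by decide)
                  | exact absurd hs (by decide)
                  | (simp only [h1, h2, h3, h4, Units.val_one, Units.val_neg, one_smul,
                      neg_smul, smul_neg, neg_neg]
                     try abel)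
    by_cases hse : ∃ e, e ∈ B.edges ∧ e ∈ D.edges
    case pos =>
      obtain ⟨e, heB, heD⟩ := hse
      push_neg at hsh
      have hept : ∀ d', Γ.endpt e d' = x := by
        have ht : Γ.endpt e true = x := hsh _
          (mem_srcs_of_mem_verts B hBne (endpts_mem_verts B e heB).1)
          (mem_srcs_of_mem_verts D hDne (endpts_mem_verts D e heD).1)
        have hf : Γ.endpt e false = x := hsh _
          (mem_srcs_of_mem_verts B hBne (endpts_mem_verts B e heB).2)
          (mem_srcs_of_mem_verts D hDne (endpts_mem_verts D e heD).2)
        intro d'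
        cases d'
        · exact hf
        · exact ht
      obtain ⟨d1, hTB, hsB⟩ := loop_structure (ω := ω) (f := f) B hBnd.1 e heB hept
      obtain ⟨d2, hTD, hsD⟩ := loop_structure (ω := ω) (f := f) D hDnd.1 e heD hept
      have hsign : Γ.sign e = -1 := by rw [← hsB]; exact hB
      rw [hTB, hTD, omega_eq_of_sign_neg hω e hsign d1 d2]
    case neg =>
      push_neg at hsh hse
      have hth : Γ.IsTightHandcuff B D :=
        ⟨⟨⟨hBne, hBnd.1, hBnd.2⟩, hB⟩, ⟨⟨hDne, hDnd.1, hDnd.2⟩, hD⟩, hsh, hse⟩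
      have hcw : Γ.IsCircuitWalk (B.append D) :=
        isCircuitWalk_of_basic _ (Or.inr (Or.inl ⟨B, D, hth, rfl⟩))
      have h0 := hT x _ hcw
      rw [tensionSum_append, hB] at h0
      have h1 := eq_neg_of_add_eq_zero_left h0
      rw [h1]
      simp

end SGraph

end Aux6
noncomputable section Aux7

namespace SGraph

open Walk

variable {V E : Type*} {Γ : SGraph V E} {G : Type*} [AddCommGroup G]
variable {ω : E → Bool → ℤˣ} {f : E → G}

theorem main_pos (hω : Γ.IsCompatible ω)
    (hT : ∀ (v : V) (W : Γ.Walk v v), Γ.IsCircuitWalk W → W.tensionSum ω f = 0) :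
    ∀ (N : ℕ) {v : V} (W : Γ.Walk v v), W.edges.length = N → W.sgn = 1 →
      W.tensionSum ω f = 0 := by
  intro N
  induction N using Nat.strong_induction_on with
  | _ N ih =>
  intro v W hlen hsgn
  by_cases hne : W.edges = []
  · exact tensionSum_of_edges_nil W hne
  by_cases hnd : W.srcs.Nodup ∧ W.edges.Nodup
  · exact hT v W (isCircuitWalk_of_basic W (Or.inl ⟨⟨hne, hnd.1, hnd.2⟩, hsgn⟩))
  · have hdec : (∃ (W' : Γ.Walk v v) (e : E), W'.edges.length + 2 = W.edges.length ∧
        W'.sgn = W.sgn ∧ W'.tensionSum ω f = W.tensionSum ω f ∧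
        W.edgeSum f = W'.edgeSum f + (f e + f e)) ∨
        (∃ (z : V) (A : Γ.Walk v z) (L : Γ.Walk z z) (C : Γ.Walk z v),
          W = A.append (L.append C) ∧ L.edges ≠ [] ∧ C.edges ≠ []) := by
      by_cases hs : W.srcs.Nodup
      · exact decomp_of_edges_dup hω W (fun he => hnd ⟨hs, he⟩)
      · exact Or.inr (decomp_of_srcs_dup W hs)
    rcases hdec with ⟨W', e0, hlen', hsgn', hT', -⟩ | ⟨z, A, L, C, hdec, hLne, hCne⟩
    · rw [← hT']
      exact ih W'.edges.length (by omega) W' rfl (by rw [hsgn']; exact hsgn)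
    · subst hdec
      rw [sgn_append, sgn_append] at hsgn
      simp only [edges_append, List.length_append] at hlen
      have hL1 : 1 ≤ L.edges.length := List.length_pos_iff.mpr hLne
      have hC1 : 1 ≤ C.edges.length := List.length_pos_iff.mpr hCne
      rcases Int.units_eq_one_or L.sgn with hLs | hLs
      · rw [hLs, one_mul] at hsgn
        have hTL := ih L.edges.length (by omega) L rfl hLs
        have hCA := ih (C.edges.length + A.edges.length) (by omega) (C.append A)
          (by simp only [edges_append, List.length_append]) (by rw [sgn_append, mul_comm]; exact hsgn)
        rw [tensionSum_append] at hCA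
        have hTA := u_solve₁ _ _ _ hCA
        simp only [tensionSum_append]
        rw [hTA, hTL]
        rcases Int.units_eq_one_or A.sgn with h1'|h1' <;>
          rcases Int.units_eq_one_or C.sgn with h2'|h2' <;>
            rw [h1', h2'] at hsgn <;>
              first
              | exact absurd hsgn (by decide)
              | (simp only [h1', h2', hLs, Units.val_one, Units.val_neg, one_smul,
                  neg_smul, smul_neg, neg_neg, smul_zero, add_zero, zero_add, smul_add]
                 try abel)
      · have hCA : (C.append A).sgn = -1 := by
          rw [sgn_append]
          rcases Int.units_eq_one_or A.sgn with h1'|h1' <;>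
            rcases Int.units_eq_one_or C.sgn with h2'|h2' <;>
              rw [h1', hLs, h2'] at hsgn <;> rw [h1', h2'] <;>
                first
                | rfl
                | exact absurd hsgn (by decide)
        have key := cprev hω hT N
          (fun W' h1 h2 => ih W'.edges.length h1 W' rfl h2)
          N le_rfl (L.edges.length + (C.edges.length + A.edges.length)) L (Walk.nil z)
          (C.append A) hLs hCA
          (by simp only [edges_append, List.length_append, edges_nil, List.length_nil]; omega)
          (by simp only [edges_append, List.length_append])
        rw [tensionSum_nil, sgn_nil, smul_zero, Units.val_one, one_smul, zero_add] at key
        simp only [tensionSum_append] at key ⊢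
        rw [key]
        rcases Int.units_eq_one_or A.sgn with h1'|h1' <;>
          rcases Int.units_eq_one_or C.sgn with h2'|h2' <;>
            rw [h1', hLs, h2'] at hsgn <;>
              first
              | exact absurd hsgn (by decide)
              | (simp only [h1', h2', hLs, Units.val_one, Units.val_neg, one_smul,
                  neg_smul, smul_neg, neg_neg, smul_zero, add_zero, zero_add, smul_add,
                  smul_sub]
                 try abel)

theorem main_neg (hω : Γ.IsCompatible ω)
    (hT : ∀ (v : V) (W : Γ.Walk v v), Γ.IsCircuitWalk W → W.tensionSum ω f = 0)
    (hU : ∀ (v : V) (W : Γ.Walk v v), Γ.IsUnbalancedCycle W → W.edgeSum f ∈ twoG G) :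
    ∀ (N : ℕ) {v : V} (W : Γ.Walk v v), W.edges.length = N → W.sgn = -1 →
      W.edgeSum f ∈ twoG G := by
  intro N
  induction N using Nat.strong_induction_on with
  | _ N ih =>
  intro v W hlen hsgn
  have hne : W.edges ≠ [] := edges_ne_nil_of_sgn_neg W hsgn
  by_cases hnd : W.srcs.Nodup ∧ W.edges.Nodup
  · exact hU v W ⟨⟨hne, hnd.1, hnd.2⟩, hsgn⟩
  · have hdec : (∃ (W' : Γ.Walk v v) (e : E), W'.edges.length + 2 = W.edges.length ∧
        W'.sgn = W.sgn ∧ W'.tensionSum ω f = W.tensionSum ω f ∧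
        W.edgeSum f = W'.edgeSum f + (f e + f e)) ∨
        (∃ (z : V) (A : Γ.Walk v z) (L : Γ.Walk z z) (C : Γ.Walk z v),
          W = A.append (L.append C) ∧ L.edges ≠ [] ∧ C.edges ≠ []) := by
      by_cases hs : W.srcs.Nodup
      · exact decomp_of_edges_dup hω W (fun he => hnd ⟨hs, he⟩)
      · exact Or.inr (decomp_of_srcs_dup W hs)
    have hlp : 1 ≤ W.edges.length := List.length_pos_iff.mpr hne
    rcases hdec with ⟨W', e0, hlen', hsgn', -, hES⟩ | ⟨z, A, L, C, hdec, hLne, hCne⟩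
    · rw [hES]
      exact AddSubgroup.add_mem _
        (ih W'.edges.length (by omega) W' rfl (by rw [hsgn']; exact hsgn))
        (two_mem_twoG _)
    · subst hdec
      rw [sgn_append, sgn_append] at hsgn
      simp only [edges_append, List.length_append] at hlen
      have hL1 : 1 ≤ L.edges.length := List.length_pos_iff.mpr hLne
      have hC1 : 1 ≤ C.edges.length := List.length_pos_iff.mpr hCne
      have hsplit : (A.append (L.append C)).edgeSum f
          = L.edgeSum f + (C.append A).edgeSum f := by
        simp only [edgeSum_append]
        abel
      rw [hsplit]
      rcases Int.units_eq_one_or L.sgn with hLs | hLs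
      · rw [hLs, one_mul] at hsgn
        have hTL := main_pos hω hT L.edges.length L rfl hLs
        have hLmem : L.edgeSum f ∈ twoG G := by
          rw [mem_twoG_iff, ← qg_tensionSum_eq_edgeSum, hTL, map_zero]
        have hCA : (C.append A).edgeSum f ∈ twoG G :=
          ih (C.edges.length + A.edges.length) (by omega) (C.append A)
            (by simp only [edges_append, List.length_append])
            (by rw [sgn_append, mul_comm]; exact hsgn)
        exact AddSubgroup.add_mem _ hLmem hCA
      · have hCAsgn : (C.append A).sgn = 1 := by
          rw [sgn_append]
          rcases Int.units_eq_one_or A.sgn with h1'|h1' <;>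
            rcases Int.units_eq_one_or C.sgn with h2'|h2' <;>
              rw [h1', hLs, h2'] at hsgn <;> rw [h1', h2'] <;>
                first
                | rfl
                | exact absurd hsgn (by decide)
        have hTCA := main_pos hω hT (C.append A).edges.length (C.append A) rfl hCAsgn
        have hCAmem : (C.append A).edgeSum f ∈ twoG G := by
          rw [mem_twoG_iff, ← qg_tensionSum_eq_edgeSum, hTCA, map_zero]
        have hLmem : L.edgeSum f ∈ twoG G := ih L.edges.length (by omega) L rfl hLs
        exact AddSubgroup.add_mem _ hLmem hCAmem

end SGraph

end Aux7


section Statement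

open SGraph

/-- Proposition 7.5: `G`-tensions are characterized by the vanishing of the
alternating sum along every positive closed walk, and `G`-potential differences
by the additional condition that the edge sum along every negative closed walk
lies in `2G`. -/
theorem tension_iff_positive_closed_walks (V E : Type) [Finite V] [Finite E]
    (Γ : SGraph V E) (ω : E → Bool → ℤˣ) (hω : Γ.IsCompatible ω)
    (G : Type) [AddCommGroup G] [Finite G] (f : E → G) :
    (Γ.IsTension ω f ↔
      ∀ (v : V) (W : Γ.Walk v v), W.sgn = 1 → W.tensionSum ω f = 0) ∧
    (Γ.IsPotentialDifference ω f ↔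
      (Γ.IsTension ω f ∧
        ∀ (v : V) (W : Γ.Walk v v), W.sgn = -1 → W.edgeSum f ∈ twoG G)) := by
  constructor
  · constructor
    · intro hTen v W hsgn
      exact main_pos hω (fun v' W' hcw => hTen v' W' hcw) W.edges.length W rfl hsgn
    · intro hPos v W hcw
      exact hPos v W (sgn_of_circuitWalk hcw)
  · constructor
    · intro hPD
      refine ⟨hPD.1, fun v W hsgn => ?_⟩
      exact main_neg hω (fun v' W' hcw => hPD.1 v' W' hcw) hPD.2 W.edges.length W rfl hsgn
    · intro h
      exact ⟨h.1, fun v W hUC => h.2 v W hUC.2⟩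

end Statement
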